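/- Let V be a finite-dimensional vector space over ℚ and let N : V → V be a nilpotent linear endomorphism. Suppose L and L′ are two families of subspaces of V indexed by ℤ such that each of L, L′: (i) is increasing, equals 0 for all sufficiently small indices and equals V for all sufficiently large indices; (ii) satisfies N(L_k) ⊆ L_{k−2} for all k; and (iii) for every natural number r: N^r maps L_r into L_{−r}, every element of L_{−r} is congruent modulo L_{−r−1} to N^r(y) for some y ∈ L_r, and every y ∈ L_r with N^r(y) ∈ L_{−r−1} lies in L_{r−1} (so N^r induces an isomorphism L_r/L_{r−1} ≅ L_{−r}/L_{−r−1}). Then L_k = L′_k for every integer k. -/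

import Mathlib

/-- The defining properties of the monodromy-weight filtration of a nilpotent
endomorphism `N`: an increasing exhaustive filtration `L` indexed by `ℤ`, vanishing for
small indices and everything for large indices, with `N (L k) ⊆ L (k-2)`, such that
`N^r` induces an isomorphism `L r / L (r-1) ≅ L (-r) / L (-r-1)` for every `r : ℕ`. -/
def IsMonodromyWeightFiltration {V : Type*} [AddCommGroup V] [Module ℚ V]
    (N : V →ₗ[ℚ] V) (L : ℤ → Submodule ℚ V) : Prop :=
  (Monotone L ∧ (∃ k₀ : ℤ, ∀ k ≤ k₀, L k = ⊥) ∧ (∃ k₁ : ℤ, ∀ k ≥ k₁, L k = ⊤)) ∧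
  (∀ k : ℤ, ∀ x ∈ L k, N x ∈ L (k - 2)) ∧
  (∀ r : ℕ,
    (∀ y ∈ L (r : ℤ), (N ^ r) y ∈ L (-(r : ℤ))) ∧
    (∀ x ∈ L (-(r : ℤ)), ∃ y ∈ L (r : ℤ), x - (N ^ r) y ∈ L (-(r : ℤ) - 1)) ∧
    (∀ y ∈ L (r : ℤ), (N ^ r) y ∈ L (-(r : ℤ) - 1) → y ∈ L ((r : ℤ) - 1)))

namespace MWFAux

variable {V : Type*} [AddCommGroup V] [Module ℚ V]

/-- iterating N d times drops the index by 2d -/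
lemma iter_mem (N : V →ₗ[ℚ] V) (L : ℤ → Submodule ℚ V)
    (h2 : ∀ k : ℤ, ∀ x ∈ L k, N x ∈ L (k - 2)) :
    ∀ d : ℕ, ∀ k : ℤ, ∀ x ∈ L k, (N ^ d) x ∈ L (k - 2 * d) := by
  intro d
  induction d with
  | zero => intro k x hx; simpa using hx
  | succ d ih =>
    intro k x hx
    have h := ih (k - 2) (N x) (h2 k x hx)
    have hidx : k - 2 - 2 * (d : ℤ) = k - 2 * ((d : ℕ) + 1 : ℕ) := by push_cast; ring
    rw [hidx] at h
    rw [pow_succ]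
    simpa using h

/-- ascending: if N^{r+1} x lands deep enough, then x ∈ L r -/
lemma mem_of_pow (N : V →ₗ[ℚ] V) (L : ℤ → Submodule ℚ V)
    (hL : IsMonodromyWeightFiltration N L) (r : ℕ) (x : V)
    (hx : (N ^ (r + 1)) x ∈ L (-(r : ℤ) - 2)) : x ∈ L (r : ℤ) := by
  obtain ⟨⟨hmono, ⟨k₀, hbot⟩, ⟨k₁, htop⟩⟩, h2, h3⟩ := hL
  have key : ∀ d : ℕ, x ∈ L ((r : ℤ) + d) → x ∈ L (r : ℤ) := by
    intro d
    induction d with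
    | zero => intro h; simpa using h
    | succ d ih =>
      intro h
      apply ih
      set r' : ℕ := r + d + 1 with hr'
      have hx' : x ∈ L (r' : ℤ) := by
        have : (r : ℤ) + ((d : ℕ) + 1 : ℕ) = (r' : ℤ) := by simp only [hr']; push_cast; ring
        rwa [this] at h
      have hpow : (N ^ r') x = (N ^ d) ((N ^ (r + 1)) x) := by
        have : r' = (r + 1) + d := by omega
        rw [this, add_comm (r+1) d, pow_add]
        rfl
      have hmem : (N ^ r') x ∈ L (-(r : ℤ) - 2 - 2 * d) := by
        rw [hpow]; exact iter_mem N L h2 d _ _ hx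
      have hle : -(r : ℤ) - 2 - 2 * d ≤ -(r' : ℤ) - 1 := by
        simp only [hr']; push_cast; omega
      have := (h3 r').2.2 x hx' (hmono hle hmem)
      have hidx : (r' : ℤ) - 1 = (r : ℤ) + d := by simp only [hr']; push_cast; ring
      rwa [hidx] at this
  have hd : ((k₁ - r).toNat : ℤ) ≥ k₁ - r := Int.self_le_toNat _
  exact key (k₁ - r).toNat (by rw [htop _ (by omega)]; trivial)

lemma pos_eq (N : V →ₗ[ℚ] V) (L : ℤ → Submodule ℚ V)
    (hL : IsMonodromyWeightFiltration N L) (r : ℕ) :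
    L (r : ℤ) = Submodule.comap (N ^ (r + 1)) (L (-(r : ℤ) - 2)) := by
  ext x
  constructor
  · intro hx
    have := iter_mem N L hL.2.1 (r + 1) r x hx
    have hidx : (r : ℤ) - 2 * ((r : ℕ) + 1 : ℕ) = -(r : ℤ) - 2 := by push_cast; ring
    rw [hidx] at this
    exact this
  · intro hx
    exact mem_of_pow N L hL r x hx

lemma neg_eq (N : V →ₗ[ℚ] V) (L : ℤ → Submodule ℚ V)
    (hL : IsMonodromyWeightFiltration N L) (r : ℕ) :
    L (-(r : ℤ)) = Submodule.map (N ^ r) (L (r : ℤ)) ⊔ L (-(r : ℤ) - 1) := by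
  apply le_antisymm
  · intro x hx
    obtain ⟨y, hy, hxy⟩ := (hL.2.2 r).2.1 x hx
    have : x = (N ^ r) y + (x - (N ^ r) y) := by abel
    rw [this]
    exact Submodule.add_mem_sup (Submodule.mem_map_of_mem hy) hxy
  · apply sup_le
    · rintro _ ⟨y, hy, rfl⟩
      exact (hL.2.2 r).1 y hy
    · exact hL.1.1 (by omega)

lemma neg_bot (N : V →ₗ[ℚ] V) (L : ℤ → Submodule ℚ V)
    (hL : IsMonodromyWeightFiltration N L) (m : ℕ) (hm : N ^ m = 0) :
    ∀ r : ℕ, m ≤ r → L (-(r : ℤ)) = ⊥ := by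
  obtain ⟨⟨hmono, ⟨k₀, hbot⟩, ⟨k₁, htop⟩⟩, h2, h3⟩ := hL
  have step : ∀ r : ℕ, m ≤ r → L (-(r : ℤ)) ≤ L (-(r : ℤ) - 1) := by
    intro r hr x hx
    obtain ⟨y, hy, hxy⟩ := (h3 r).2.1 x hx
    have : (N ^ r) y = 0 := by
      rw [pow_eq_zero_of_le hr hm]; rfl
    rwa [this, sub_zero] at hxy
  have chain : ∀ d : ℕ, ∀ r : ℕ, m ≤ r → L (-(r : ℤ)) ≤ L (-(r : ℤ) - d) := by
    intro d
    induction d with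
    | zero => intro r hr; simp
    | succ d ih =>
      intro r hr
      refine le_trans (step r hr) ?_
      have h1 : L (-(r : ℤ) - 1) = L (-((r + 1 : ℕ) : ℤ)) := by push_cast; ring_nf
      rw [h1]
      refine le_trans (ih (r + 1) (by omega)) ?_
      apply le_of_eq; congr 1; push_cast; ring
  intro r hr
  refine le_antisymm ?_ bot_le
  set d : ℕ := (-k₀ - r).toNat with hd
  refine le_trans (chain d r hr) ?_
  rw [hbot]
  have : ((-k₀ - r).toNat : ℤ) ≥ -k₀ - r := Int.self_le_toNat _
  omega

end MWFAux

theorem stmt_1 (V : Type*) [AddCommGroup V] [Module ℚ V] [FiniteDimensional ℚ V]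
    (N : V →ₗ[ℚ] V) (hN : IsNilpotent N)
    (L L' : ℤ → Submodule ℚ V)
    (hL : IsMonodromyWeightFiltration N L) (hL' : IsMonodromyWeightFiltration N L') :
    ∀ k : ℤ, L k = L' k := by
  obtain ⟨m, hm⟩ := hN
  have neg : ∀ d : ℕ, ∀ r : ℕ, m ≤ r + d → L (-(r : ℤ)) = L' (-(r : ℤ)) := by
    intro d
    induction d with
    | zero =>
      intro r hr
      rw [MWFAux.neg_bot N L hL m hm r (by omega),
        MWFAux.neg_bot N L' hL' m hm r (by omega)]
    | succ d ih =>
      intro r hr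
      have h1 : L (-(r : ℤ) - 1) = L (-((r + 1 : ℕ) : ℤ)) := by congr 1; push_cast; ring
      have h1' : L' (-(r : ℤ) - 1) = L' (-((r + 1 : ℕ) : ℤ)) := by congr 1; push_cast; ring
      have h2 : L (-(r : ℤ) - 2) = L (-((r + 2 : ℕ) : ℤ)) := by congr 1; push_cast; ring
      have h2' : L' (-(r : ℤ) - 2) = L' (-((r + 2 : ℕ) : ℤ)) := by congr 1; push_cast; ring
      rw [MWFAux.neg_eq N L hL r, MWFAux.neg_eq N L' hL' r,
        MWFAux.pos_eq N L hL r, MWFAux.pos_eq N L' hL' r,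
        h1, h1', h2, h2', ih (r + 1) (by omega), ih (r + 2) (by omega)]
  intro k
  rcases Int.eq_nat_or_neg k with ⟨r, rfl | rfl⟩
  · rw [MWFAux.pos_eq N L hL r, MWFAux.pos_eq N L' hL' r]
    have h2 : L (-(r : ℤ) - 2) = L (-((r + 2 : ℕ) : ℤ)) := by congr 1; push_cast; ring
    have h2' : L' (-(r : ℤ) - 2) = L' (-((r + 2 : ℕ) : ℤ)) := by congr 1; push_cast; ring
    rw [h2, h2', neg m (r + 2) (by omega)]
  · exact neg m r (by omega)
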